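/- (Geometric decay in generations for Carleson families) Let σ be a positive locally finite Borel measure on ℝⁿ, let 𝒟 be a dyadic grid, and let 𝓕 ⊆ 𝒟 be a σ-Carleson collection with constant C₀, i.e. Σ_{F′ ∈ 𝓕 : F′ ⊆ F} σ(F′) ≤ C₀ σ(F) for every F ∈ 𝓕. For F ∈ 𝓕 let 𝔠_𝓕(F) denote the maximal members of 𝓕 strictly contained in F, and define the k-th generation below F by 𝔠_𝓕^{(0)}(F) := {F} and 𝔠_𝓕^{(k+1)}(F) := ⋃_{F′ ∈ 𝔠_𝓕^{(k)}(F)} 𝔠_𝓕(F′). Then there exist constants C₁ > 0 and ε > 0, depending only on C₀, such that Σ_{F′ ∈ 𝔠_𝓕^{(k)}(F)} σ(F′) ≤ (C₁ 2^{−εk})² σ(F) for all F ∈ 𝓕 and all k ≥ 0. -/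

import Mathlib

open MeasureTheory
open scoped ENNReal NNReal

noncomputable section

/-- An axis-parallel half-open cube in `ℝⁿ`, given by its corner `a` and side length `l`. -/
structure QCube (n : ℕ) where
  a : Fin n → ℝ
  l : ℝ

/-- The half-open cube as a subset of `ℝⁿ`. -/
def QCube.pts {n : ℕ} (Q : QCube n) : Set (EuclideanSpace ℝ (Fin n)) :=
  {x | ∀ i, Q.a i ≤ x i ∧ x i < Q.a i + Q.l}

/-- The dyadic grid on `ℝⁿ` obtained by translating the standard grid by `t`. -/
def dyadicGrid {n : ℕ} (t : Fin n → ℝ) : Set (QCube n) :=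
  {Q | ∃ (k : ℤ) (m : Fin n → ℤ),
    Q = ⟨fun i => t i + (2:ℝ) ^ (-k) * (m i : ℝ), (2:ℝ) ^ (-k)⟩}

/-- `𝓕` is a `σ`-Carleson collection with constant `C₀`:
`Σ_{F'∈𝓕, F'⊆F} σ(F') ≤ C₀ σ(F)` for all `F ∈ 𝓕`. -/
def IsCarleson {n : ℕ} (σ : Measure (EuclideanSpace ℝ (Fin n))) (C₀ : ℝ)
    (F𝓕 : Set (QCube n)) : Prop :=
  ∀ F ∈ F𝓕, (∑' G : {G : QCube n // G ∈ F𝓕 ∧ G.pts ⊆ F.pts}, σ (G : QCube n).pts)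
    ≤ ENNReal.ofReal C₀ * σ F.pts

/-- `𝔠_𝓕(F)`: the maximal members of `𝓕` strictly contained in `F`. -/
def FChildren {n : ℕ} (F𝓕 : Set (QCube n)) (F : QCube n) : Set (QCube n) :=
  {G | G ∈ F𝓕 ∧ G.pts ⊂ F.pts ∧
    ∀ H ∈ F𝓕, H.pts ⊂ F.pts → G.pts ⊆ H.pts → H.pts ⊆ G.pts}

/-- `𝔠_𝓕^{(k)}(F)`: the `k`-th generation of `𝓕` below `F`. -/
def FGen {n : ℕ} (F𝓕 : Set (QCube n)) (F : QCube n) : ℕ → Set (QCube n)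
  | 0 => {F}
  | k + 1 => ⋃ G ∈ FGen F𝓕 F k, FChildren F𝓕 G

namespace S13

variable {n : ℕ} {t : Fin n → ℝ}

lemma grid_l_pos {Q : QCube n} (hQ : Q ∈ dyadicGrid t) : 0 < Q.l := by
  obtain ⟨k, m, rfl⟩ := hQ
  positivity

lemma corner_mem_pts {Q : QCube n} (hl : 0 < Q.l) :
    (WithLp.toLp 2 Q.a : EuclideanSpace ℝ (Fin n)) ∈ Q.pts :=
  fun i => ⟨le_refl _, by simpa using hl⟩

lemma pts_nonempty {Q : QCube n} (hl : 0 < Q.l) : Q.pts.Nonempty :=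
  ⟨WithLp.toLp 2 Q.a, corner_mem_pts hl⟩

lemma pts_measurable (Q : QCube n) : MeasurableSet Q.pts := by
  have h : Q.pts = ⋂ i, (fun x : EuclideanSpace ℝ (Fin n) => x i) ⁻¹'
      (Set.Ico (Q.a i) (Q.a i + Q.l)) := by
    ext x; simp [QCube.pts, Set.mem_iInter, Set.mem_Ico]
  rw [h]
  exact MeasurableSet.iInter fun i => ((measurable_pi_apply i).comp (WithLp.measurable_ofLp 2 _)) measurableSet_Ico

lemma key1d {c : ℝ} (hc : 0 < c) {D m m' : ℤ} {x : ℝ}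
    (h1 : c * (m:ℝ) ≤ x) (h2 : x < c * ((m:ℝ) + 1))
    (h3 : c * ((D:ℝ) * (m':ℝ)) ≤ x) (h4 : x < c * ((D:ℝ) * ((m':ℝ) + 1))) :
    ((D:ℝ) * (m':ℝ) ≤ (m:ℝ)) ∧ ((m:ℝ) + 1 ≤ (D:ℝ) * ((m':ℝ) + 1)) := by
  have e1 : (D:ℝ) * (m':ℝ) < (m:ℝ) + 1 := (mul_lt_mul_iff_right₀ hc).mp (h3.trans_lt h2)
  have e2 : (m:ℝ) < (D:ℝ) * ((m':ℝ) + 1) := (mul_lt_mul_iff_right₀ hc).mp (h1.trans_lt h4)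
  have i1 : D * m' < m + 1 := by exact_mod_cast e1
  have i2 : m < D * (m' + 1) := by exact_mod_cast e2
  constructor
  · exact_mod_cast (by omega : D * m' ≤ m)
  · exact_mod_cast (by omega : m + 1 ≤ D * (m' + 1))

lemma grid_subset_of_inter {Q Q' : QCube n} (hQ : Q ∈ dyadicGrid t) (hQ' : Q' ∈ dyadicGrid t)
    (hl : Q.l ≤ Q'.l) (hx : (Q.pts ∩ Q'.pts).Nonempty) : Q.pts ⊆ Q'.pts := by
  obtain ⟨k, m, rfl⟩ := hQ
  obtain ⟨k', m', rfl⟩ := hQ'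
  dsimp only at hl
  have hk : k' ≤ k := by
    by_contra hkk
    push_neg at hkk
    have : (2:ℝ) ^ (-k') < (2:ℝ) ^ (-k) :=
      zpow_lt_zpow_right₀ (by norm_num : (1:ℝ) < 2) (by omega)
    linarith
  set c : ℝ := (2:ℝ) ^ (-k) with hcdef
  have hc : 0 < c := by positivity
  set D : ℤ := 2 ^ (k - k').toNat with hDdef
  have hD : (2:ℝ) ^ (-k') = c * (D:ℝ) := by
    rw [hcdef, hDdef]
    push_cast
    rw [← zpow_natCast (2:ℝ) (k - k').toNat, Int.toNat_of_nonneg (by omega : 0 ≤ k - k'),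
      ← zpow_add₀ (by norm_num : (2:ℝ) ≠ 0)]
    ring_nf
  obtain ⟨x, hx1, hx2⟩ := hx
  simp only [QCube.pts, Set.mem_setOf_eq] at hx1 hx2
  intro y hy
  simp only [QCube.pts, Set.mem_setOf_eq] at hy ⊢
  intro i
  obtain ⟨A1, A2⟩ := hx1 i
  obtain ⟨B1, B2⟩ := hx2 i
  obtain ⟨C1, C2⟩ := hy i
  rw [hD] at B1 B2
  have key := key1d hc (D := D) (m := m i) (m' := m' i) (x := x i - t i)
    (by linarith) (by linarith) (by linarith) (by linarith)
  obtain ⟨k1, k2⟩ := key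
  have q1 : c * ((D:ℝ) * (m' i : ℝ)) ≤ c * (m i : ℝ) := mul_le_mul_of_nonneg_left k1 hc.le
  have q2 : c * ((m i : ℝ) + 1) ≤ c * ((D:ℝ) * ((m' i : ℝ) + 1)) :=
    mul_le_mul_of_nonneg_left k2 hc.le
  rw [hD]
  constructor
  · linarith
  · linarith

lemma pts_univ_of_n_zero (hn : n = 0) (Q : QCube n) : Q.pts = Set.univ := by
  subst hn; ext x; refine ⟨fun _ => trivial, fun _ i => i.elim0⟩

lemma pts_inj (hn : n ≠ 0) {Q Q' : QCube n} (hQ : Q ∈ dyadicGrid t) (hQ' : Q' ∈ dyadicGrid t)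
    (h : Q.pts = Q'.pts) : Q = Q' := by
  have hl : 0 < Q.l := grid_l_pos hQ
  have hl' : 0 < Q'.l := grid_l_pos hQ'
  have key0 := Set.ext_iff.mp h (WithLp.toLp 2 Q.a)
  have key0' := Set.ext_iff.mp h (WithLp.toLp 2 Q'.a)
  simp only [QCube.pts, Set.mem_setOf_eq, WithLp.ofLp_toLp] at key0 key0'
  have m1 : ∀ i, Q'.a i ≤ Q.a i ∧ Q.a i < Q'.a i + Q'.l :=
    key0.mp (fun i => ⟨le_refl _, by linarith⟩)
  have m2 : ∀ i, Q.a i ≤ Q'.a i ∧ Q'.a i < Q.a i + Q.l :=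
    key0'.mpr (fun i => ⟨le_refl _, by linarith⟩)
  have ha : Q.a = Q'.a := funext fun i => le_antisymm (m2 i).1 (m1 i).1
  have hll : Q.l = Q'.l := by
    by_contra hne
    obtain ⟨i0⟩ : Nonempty (Fin n) := ⟨⟨0, Nat.pos_of_ne_zero hn⟩⟩
    rcases lt_or_gt_of_ne hne with hlt | hlt
    · have key := Set.ext_iff.mp h (WithLp.toLp 2 (fun i => Q.a i + Q.l))
      simp only [QCube.pts, Set.mem_setOf_eq, WithLp.ofLp_toLp] at key
      have hmem : ∀ i, Q'.a i ≤ Q.a i + Q.l ∧ Q.a i + Q.l < Q'.a i + Q'.l := fun i => by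
        rw [← ha]; exact ⟨by linarith, by linarith⟩
      have := (key.mpr hmem) i0
      linarith [this.2]
    · have key := Set.ext_iff.mp h (WithLp.toLp 2 (fun i => Q'.a i + Q'.l))
      simp only [QCube.pts, Set.mem_setOf_eq, WithLp.ofLp_toLp] at key
      have hmem : ∀ i, Q.a i ≤ Q'.a i + Q'.l ∧ Q'.a i + Q'.l < Q.a i + Q.l := fun i => by
        rw [ha]; exact ⟨by linarith, by linarith⟩
      have := (key.mp hmem) i0
      linarith [this.2]
  cases Q; cases Q'
  simp only [QCube.mk.injEq]
  exact ⟨ha, hll⟩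

variable {n : ℕ} {t : Fin n → ℝ} {F𝓕 : Set (QCube n)}

lemma children_disjoint (hgrid : F𝓕 ⊆ dyadicGrid t) {F : QCube n}
    {G G' : QCube n} (hG : G ∈ FChildren F𝓕 F) (hG' : G' ∈ FChildren F𝓕 F) (hne : G ≠ G') :
    Disjoint G.pts G'.pts := by
  by_contra hd
  rw [Set.not_disjoint_iff_nonempty_inter] at hd
  have hn : n ≠ 0 := by
    rintro rfl
    exact (ne_of_ssubset hG.2.1) ((pts_univ_of_n_zero rfl G).trans (pts_univ_of_n_zero rfl F).symm)
  rcases le_total G.l G'.l with hl | hl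
  · have hsub := grid_subset_of_inter (hgrid hG.1) (hgrid hG'.1) hl hd
    have hsub' := hG.2.2 G' hG'.1 hG'.2.1 hsub
    exact hne (pts_inj hn (hgrid hG.1) (hgrid hG'.1) (le_antisymm hsub hsub'))
  · have hsub := grid_subset_of_inter (hgrid hG'.1) (hgrid hG.1) hl
      (by rwa [Set.inter_comm])
    have hsub' := hG'.2.2 G hG.1 hG.2.1 hsub
    exact hne (pts_inj hn (hgrid hG.1) (hgrid hG'.1) (le_antisymm hsub' hsub))

lemma children_sum_le (σ : Measure (EuclideanSpace ℝ (Fin n))) (hgrid : F𝓕 ⊆ dyadicGrid t)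
    (F : QCube n) :
    (∑' G : FChildren F𝓕 F, σ (G : QCube n).pts) ≤ σ F.pts := by
  have h1 : (∑' G : FChildren F𝓕 F, σ (G : QCube n).pts)
      ≤ σ (⋃ G : FChildren F𝓕 F, (G : QCube n).pts) :=
    tsum_meas_le_meas_iUnion_of_disjoint σ (fun G => pts_measurable _)
      (fun G G' hne =>
        children_disjoint hgrid G.2 G'.2 (fun h => hne (Subtype.ext h)))
  exact h1.trans (measure_mono (Set.iUnion_subset fun G => G.2.2.1.subset))

lemma FGen_zero (F : QCube n) : FGen F𝓕 F 0 = {F} := rfl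

lemma FGen_succ (F : QCube n) (k : ℕ) :
    FGen F𝓕 F (k+1) = ⋃ G ∈ FGen F𝓕 F k, FChildren F𝓕 G := rfl

lemma gen_subset {F : QCube n} (hF : F ∈ F𝓕) (k : ℕ) : FGen F𝓕 F k ⊆ F𝓕 := by
  cases k with
  | zero => intro G hG; rw [FGen_zero, Set.mem_singleton_iff] at hG; rwa [hG]
  | succ k =>
    intro G hG
    rw [FGen_succ] at hG
    obtain ⟨H, _, hGH⟩ := Set.mem_iUnion₂.mp hG
    exact hGH.1

lemma gen_pts_subset (k : ℕ) : ∀ {F G : QCube n}, G ∈ FGen F𝓕 F k → G.pts ⊆ F.pts := by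
  induction k with
  | zero => intro F G hG; rw [FGen_zero, Set.mem_singleton_iff] at hG; rw [hG]
  | succ k ih =>
    intro F G hG
    rw [FGen_succ] at hG
    obtain ⟨H, hH, hGH⟩ := Set.mem_iUnion₂.mp hG
    exact hGH.2.1.subset.trans (ih hH)

lemma gen_pts_ssubset (k : ℕ) {F G : QCube n} (hG : G ∈ FGen F𝓕 F (k+1)) : G.pts ⊂ F.pts := by
  rw [FGen_succ] at hG
  obtain ⟨H, hH, hGH⟩ := Set.mem_iUnion₂.mp hG
  exact hGH.2.1.trans_subset (gen_pts_subset k hH)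

lemma gen_add (b : ℕ) : ∀ (a : ℕ) (F : QCube n),
    FGen F𝓕 F (a + b) = ⋃ G ∈ FGen F𝓕 F a, FGen F𝓕 G b := by
  induction b with
  | zero =>
    intro a F
    simp only [Nat.add_zero]
    ext x
    simp [FGen_zero]
  | succ b ih =>
    intro a F
    have h : a + (b + 1) = (a + b) + 1 := by omega
    rw [h, FGen_succ, ih a F]
    ext x
    simp only [Set.mem_iUnion, exists_prop]
    constructor
    · rintro ⟨H, ⟨G, hG, hH⟩, hx⟩
      exact ⟨G, hG, by rw [FGen_succ]; exact Set.mem_iUnion₂.mpr ⟨H, hH, hx⟩⟩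
    · rintro ⟨G, hG, hx⟩
      rw [FGen_succ] at hx
      obtain ⟨H, hH, hx⟩ := Set.mem_iUnion₂.mp hx
      exact ⟨H, ⟨G, hG, hH⟩, hx⟩

lemma gen_one (F : QCube n) : FGen F𝓕 F 1 = FChildren F𝓕 F := by
  rw [FGen_succ, FGen_zero]
  simp

lemma gen_succ' (j : ℕ) (F : QCube n) :
    FGen F𝓕 F (j+1) = ⋃ c ∈ FChildren F𝓕 F, FGen F𝓕 c j := by
  have h : j + 1 = 1 + j := by omega
  rw [h, gen_add j 1 F, gen_one]

lemma gen_disj (hgrid : F𝓕 ⊆ dyadicGrid t) :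
    ∀ j j' : ℕ, ∀ F H : QCube n, j < j' → H ∈ FGen F𝓕 F j → H ∈ FGen F𝓕 F j' → False := by
  intro j
  induction j with
  | zero =>
    intro j' F H hj h0 h'
    rw [FGen_zero, Set.mem_singleton_iff] at h0
    subst h0
    obtain ⟨j'', rfl⟩ : ∃ j'', j' = j'' + 1 := ⟨j' - 1, by omega⟩
    exact (gen_pts_ssubset j'' h').ne rfl
  | succ i ih =>
    intro j' F H hj hji h'
    obtain ⟨j'', rfl⟩ : ∃ j'', j' = j'' + 1 := ⟨j' - 1, by omega⟩
    rw [gen_succ'] at hji h'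
    obtain ⟨c, hc, hHc⟩ := Set.mem_iUnion₂.mp hji
    obtain ⟨c', hc', hHc'⟩ := Set.mem_iUnion₂.mp h'
    have hH𝓕 : H ∈ F𝓕 := gen_subset hc.1 i hHc
    have hne : H.pts.Nonempty := pts_nonempty (grid_l_pos (hgrid hH𝓕))
    have hcc : c = c' := by
      by_contra hcc
      have hd := children_disjoint hgrid hc hc' hcc
      rw [Set.disjoint_left] at hd
      obtain ⟨x, hx⟩ := hne
      exact hd (gen_pts_subset i hHc hx) (gen_pts_subset j'' hHc' hx)
    exact ih j'' c H (by omega) hHc (hcc ▸ hHc')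


def genSum (σ : Measure (EuclideanSpace ℝ (Fin n))) (F𝓕 : Set (QCube n)) (F : QCube n)
    (k : ℕ) : ℝ≥0∞ :=
  ∑' G : FGen F𝓕 F k, σ (G : QCube n).pts

variable {σ : Measure (EuclideanSpace ℝ (Fin n))} {C₀ : ℝ}

lemma genSum_zero (F : QCube n) : genSum σ F𝓕 F 0 = σ F.pts := by
  unfold genSum
  rw [FGen_zero]
  exact tsum_singleton F (fun G => σ G.pts)

lemma genSum_succ_le (hgrid : F𝓕 ⊆ dyadicGrid t) (F : QCube n) (k : ℕ) :
    genSum σ F𝓕 F (k+1) ≤ genSum σ F𝓕 F k := by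
  unfold genSum
  calc (∑' G : FGen F𝓕 F (k+1), σ (G : QCube n).pts)
      ≤ ∑' G : FGen F𝓕 F k, ∑' H : FChildren F𝓕 (G : QCube n), σ (H : QCube n).pts :=
        ENNReal.tsum_biUnion_le_tsum (fun Q : QCube n => σ Q.pts) (FGen F𝓕 F k) (FChildren F𝓕)
    _ ≤ ∑' G : FGen F𝓕 F k, σ (G : QCube n).pts :=
        ENNReal.tsum_le_tsum fun G => children_sum_le σ hgrid _

lemma genSum_anti (hgrid : F𝓕 ⊆ dyadicGrid t) (F : QCube n) :
    Antitone (genSum σ F𝓕 F) :=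
  antitone_nat_of_succ_le fun k => genSum_succ_le hgrid F k

lemma sum_gen_le (hgrid : F𝓕 ⊆ dyadicGrid t) (hC : IsCarleson σ C₀ F𝓕) {G : QCube n}
    (hG : G ∈ F𝓕) (m : ℕ) :
    (∑ j ∈ Finset.range m, genSum σ F𝓕 G (j+1)) ≤ ENNReal.ofReal C₀ * σ G.pts := by
  have e : (∑ j ∈ Finset.range m, genSum σ F𝓕 G (j+1))
      = ∑' p : (Σ j : Fin m, FGen F𝓕 G ((j : ℕ)+1)), σ ((p.2 : QCube n)).pts := by
    rw [ENNReal.tsum_sigma', tsum_fintype, ← Fin.sum_univ_eq_sum_range]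
    rfl
  rw [e]
  have key : (∑' p : (Σ j : Fin m, FGen F𝓕 G ((j : ℕ)+1)), σ ((p.2 : QCube n)).pts)
      ≤ ∑' H : {H : QCube n // H ∈ F𝓕 ∧ H.pts ⊆ G.pts}, σ (H : QCube n).pts := by
    have he : Function.Injective
        (fun p : (Σ j : Fin m, FGen F𝓕 G ((j : ℕ)+1)) =>
          (⟨(p.2 : QCube n), gen_subset hG _ p.2.2, gen_pts_subset _ p.2.2⟩ :
            {H : QCube n // H ∈ F𝓕 ∧ H.pts ⊆ G.pts})) := by
      rintro ⟨j, H, hH⟩ ⟨j', H', hH'⟩ hpq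
      simp only [Subtype.mk.injEq] at hpq
      subst hpq
      have hjj : j = j' := by
        by_contra hne
        rcases lt_or_gt_of_ne (fun h => hne (Fin.ext h) : (j:ℕ) ≠ (j':ℕ)) with h | h
        · exact gen_disj hgrid _ _ G H (by omega) hH hH'
        · exact gen_disj hgrid _ _ G H (by omega) hH' hH
      subst hjj
      rfl
    exact ENNReal.tsum_comp_le_tsum_of_injective he (fun H => σ (H : QCube n).pts)
  exact key.trans (hC G hG)

lemma genSum_half (hgrid : F𝓕 ⊆ dyadicGrid t) (hC : IsCarleson σ C₀ F𝓕) {m : ℕ}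
    (hm0 : 0 < m) (hm : 2 * C₀ ≤ (m : ℝ)) {G : QCube n} (hG : G ∈ F𝓕) :
    genSum σ F𝓕 G m ≤ 2⁻¹ * σ G.pts := by
  have h1 : (m : ℝ≥0∞) * genSum σ F𝓕 G m ≤ ENNReal.ofReal C₀ * σ G.pts := by
    calc (m : ℝ≥0∞) * genSum σ F𝓕 G m
        = ∑ _j ∈ Finset.range m, genSum σ F𝓕 G m := by
          rw [Finset.sum_const, Finset.card_range, nsmul_eq_mul]
      _ ≤ ∑ j ∈ Finset.range m, genSum σ F𝓕 G (j+1) :=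
          Finset.sum_le_sum fun j hj =>
            genSum_anti hgrid G (by simpa using Nat.succ_le_of_lt (Finset.mem_range.mp hj))
      _ ≤ ENNReal.ofReal C₀ * σ G.pts := sum_gen_le hgrid hC hG m
  have hmne : (m : ℝ≥0∞) ≠ 0 := by exact_mod_cast Nat.pos_iff_ne_zero.mp hm0
  have hmtop : (m : ℝ≥0∞) ≠ ⊤ := ENNReal.natCast_ne_top m
  have h2 : ENNReal.ofReal C₀ ≤ 2⁻¹ * (m : ℝ≥0∞) := by
    have : ENNReal.ofReal C₀ ≤ ENNReal.ofReal ((m : ℝ) / 2) :=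
      ENNReal.ofReal_le_ofReal (by linarith)
    refine this.trans ?_
    rw [ENNReal.ofReal_div_of_pos (by norm_num)]
    rw [ENNReal.ofReal_natCast, ENNReal.ofReal_ofNat]
    rw [div_eq_mul_inv, mul_comm]
  calc genSum σ F𝓕 G m = (m : ℝ≥0∞)⁻¹ * ((m : ℝ≥0∞) * genSum σ F𝓕 G m) := by
        rw [← mul_assoc, ENNReal.inv_mul_cancel hmne hmtop, one_mul]
    _ ≤ (m : ℝ≥0∞)⁻¹ * (ENNReal.ofReal C₀ * σ G.pts) := by
        exact mul_le_mul_right h1 _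
    _ ≤ (m : ℝ≥0∞)⁻¹ * ((2⁻¹ * (m : ℝ≥0∞)) * σ G.pts) := by
        exact mul_le_mul_right (mul_le_mul_left h2 _) _
    _ = (2⁻¹ * ((m : ℝ≥0∞)⁻¹ * (m : ℝ≥0∞))) * σ G.pts := by ring
    _ = 2⁻¹ * σ G.pts := by rw [ENNReal.inv_mul_cancel hmne hmtop, mul_one]

lemma genSum_decay (hgrid : F𝓕 ⊆ dyadicGrid t) (hC : IsCarleson σ C₀ F𝓕) {m : ℕ}
    (hm0 : 0 < m) (hm : 2 * C₀ ≤ (m : ℝ)) {F : QCube n} (hF : F ∈ F𝓕) (q : ℕ) :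
    genSum σ F𝓕 F (q * m) ≤ 2⁻¹ ^ q * σ F.pts := by
  induction q with
  | zero => simp [genSum_zero]
  | succ q ih =>
    have hq : (q + 1) * m = q * m + m := by ring
    have key : genSum σ F𝓕 F (q * m + m)
        ≤ ∑' G : FGen F𝓕 F (q * m), 2⁻¹ * σ (G : QCube n).pts := by
      unfold genSum
      calc (∑' H : FGen F𝓕 F (q * m + m), σ (H : QCube n).pts)
          = ∑' H : ⋃ G ∈ FGen F𝓕 F (q * m), FGen F𝓕 G m, σ (H : QCube n).pts :=
            tsum_congr_set_coe (fun Q : QCube n => σ Q.pts) (gen_add m (q * m) F)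
        _ ≤ ∑' G : FGen F𝓕 F (q * m), ∑' H : FGen F𝓕 (G : QCube n) m, σ (H : QCube n).pts :=
            ENNReal.tsum_biUnion_le_tsum (fun Q : QCube n => σ Q.pts) _ _
        _ ≤ ∑' G : FGen F𝓕 F (q * m), 2⁻¹ * σ (G : QCube n).pts :=
            ENNReal.tsum_le_tsum fun G =>
              genSum_half hgrid hC hm0 hm (gen_subset hF _ G.2)
    rw [hq]
    calc genSum σ F𝓕 F (q * m + m) ≤ ∑' G : FGen F𝓕 F (q * m), 2⁻¹ * σ (G : QCube n).pts := key
      _ = 2⁻¹ * genSum σ F𝓕 F (q * m) := by rw [ENNReal.tsum_mul_left]; rfl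
      _ ≤ 2⁻¹ * (2⁻¹ ^ q * σ F.pts) := mul_le_mul_right ih _
      _ = 2⁻¹ ^ (q + 1) * σ F.pts := by ring

end S13

/-- **Geometric decay in generations for Carleson families.** If `𝓕 ⊆ 𝒟` is
a `σ`-Carleson collection with constant `C₀`, then there are `C₁ > 0` and `ε > 0`,
depending only on `C₀`, such that
`Σ_{F' ∈ 𝔠_𝓕^{(k)}(F)} σ(F') ≤ (C₁ 2^{−εk})² σ(F)` for all `F ∈ 𝓕` and `k ≥ 0`. -/
theorem statement13 (C₀ : ℝ) (hC₀ : 0 < C₀) :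
    ∃ C₁ ε : ℝ, 0 < C₁ ∧ 0 < ε ∧
      ∀ (n : ℕ) (t : Fin n → ℝ) (σ : Measure (EuclideanSpace ℝ (Fin n))),
        IsLocallyFiniteMeasure σ →
      ∀ F𝓕 : Set (QCube n), F𝓕 ⊆ dyadicGrid t → IsCarleson σ C₀ F𝓕 →
      ∀ F ∈ F𝓕, ∀ k : ℕ,
        (∑' G : FGen F𝓕 F k, σ (G : QCube n).pts)
          ≤ ENNReal.ofReal ((C₁ * 2 ^ (-ε * (k : ℝ))) ^ 2) * σ F.pts := by
  classical
  set m : ℕ := ⌈2 * C₀⌉₊ with hmdef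
  have hm0 : 0 < m := Nat.ceil_pos.mpr (by linarith)
  have hm : 2 * C₀ ≤ (m : ℝ) := Nat.le_ceil _
  have hM : (0:ℝ) < m := by exact_mod_cast hm0
  refine ⟨2, 1 / (2 * (m : ℝ)), by norm_num, by positivity, ?_⟩
  intro n t σ _ F𝓕 hgrid hC F hF k
  set q : ℕ := k / m with hqdef
  have hqm : q * m ≤ k := by rw [hqdef, Nat.mul_comm]; exact Nat.mul_div_le k m -- check
  have h1 : (∑' G : FGen F𝓕 F k, σ (G : QCube n).pts) ≤ S13.genSum σ F𝓕 F (q * m) :=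
    S13.genSum_anti hgrid F hqm
  have h2 : S13.genSum σ F𝓕 F (q * m) ≤ 2⁻¹ ^ q * σ F.pts :=
    S13.genSum_decay hgrid hC hm0 hm hF q
  refine (h1.trans h2).trans ?_
  have hcoef : (2⁻¹ : ℝ≥0∞) ^ q ≤ ENNReal.ofReal ((2 * 2 ^ (-(1 / (2 * (m:ℝ))) * (k : ℝ))) ^ 2) := by
    have hh : (2⁻¹ : ℝ≥0∞) ^ q = ENNReal.ofReal ((2⁻¹ : ℝ) ^ q) := by
      rw [ENNReal.ofReal_pow (by norm_num)]
      congr 1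
      rw [ENNReal.ofReal_inv_of_pos (by norm_num), ENNReal.ofReal_ofNat]
    rw [hh]
    apply ENNReal.ofReal_le_ofReal
    -- real inequality
    have hk1 : (k : ℝ) < (m : ℝ) * q + (m : ℝ) := by
      have hlt : k < (q + 1) * m := (Nat.div_lt_iff_lt_mul hm0).mp (Nat.lt_succ_self q)
      have hlt' : (k:ℝ) < ((q:ℝ) + 1) * (m:ℝ) := by exact_mod_cast hlt
      nlinarith
    have hexp : -(q : ℝ) ≤ 2 + (-(1 / (2 * (m:ℝ))) * (k : ℝ) + -(1 / (2 * (m:ℝ))) * (k : ℝ)) := by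
      have hkm : (k : ℝ) / (m : ℝ) ≤ (q : ℝ) + 1 := by
        rw [div_le_iff₀ hM]
        nlinarith
      have : -(1 / (2 * (m:ℝ))) * (k : ℝ) + -(1 / (2 * (m:ℝ))) * (k : ℝ) = -((k:ℝ)/(m:ℝ)) := by
        field_simp
        ring
      rw [this]
      linarith
    calc ((2:ℝ)⁻¹) ^ q = (2:ℝ) ^ (-(q:ℝ)) := by
          rw [Real.rpow_neg (by norm_num), Real.rpow_natCast, inv_pow]
      _ ≤ (2:ℝ) ^ ((2:ℝ) + (-(1 / (2 * (m:ℝ))) * (k : ℝ) + -(1 / (2 * (m:ℝ))) * (k : ℝ))) :=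
          Real.rpow_le_rpow_left_iff (by norm_num : (1:ℝ) < 2) |>.mpr hexp
      _ = (2 * 2 ^ (-(1 / (2 * (m:ℝ))) * (k : ℝ))) ^ 2 := by
          rw [Real.rpow_add (by norm_num : (0:ℝ) < 2), Real.rpow_add (by norm_num : (0:ℝ) < 2)]
          have h4 : (2:ℝ) ^ (2:ℝ) = 4 := by
            have h := Real.rpow_natCast (2:ℝ) 2
            have h2 : ((2:ℕ):ℝ) = (2:ℝ) := by norm_num
            rw [h2] at h
            rw [h]
            norm_num
          rw [h4]
          ring
  calc (2⁻¹ : ℝ≥0∞) ^ q * σ F.pts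
      ≤ ENNReal.ofReal ((2 * 2 ^ (-(1 / (2 * (m:ℝ))) * (k : ℝ))) ^ 2) * σ F.pts :=
        mul_le_mul_left hcoef _
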